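/- Let 𝒜 = Mₙ₁(ℂ) ⊕ Mₙ₂(ℂ) with norm ‖A₁ ⊕ A₂‖ = max(‖A₁‖, ‖A₂‖), and let x₁, x₂ be unit vectors in ℂ^{n₁}, ℂ^{n₂}. Then for a unimodular μ ∈ ℂ, the element x₁x₁* ⊕ μ x₂x₂* is Birkhoff–James orthogonal to the identity I ⊕ I if and only if μ = −1. -/

import Mathlib

set_option maxHeartbeats 1000000

open Matrix

/-- The operator (spectral) norm of a complex matrix, induced by the Euclidean norm on `ℂⁿ`. -/
noncomputable def opNorm {n : ℕ} (A : Matrix (Fin n) (Fin n) ℂ) : ℝ :=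
  ‖Matrix.toEuclideanCLM (𝕜 := ℂ) (n := Fin n) A‖

/-- Birkhoff–James orthogonality on the direct sum `Mₙ₁(ℂ) ⊕ Mₙ₂(ℂ)` with the max norm. -/
def BJ2 {n₁ n₂ : ℕ} (A B : Matrix (Fin n₁) (Fin n₁) ℂ × Matrix (Fin n₂) (Fin n₂) ℂ) : Prop :=
  ∀ c : ℂ, max (opNorm A.1) (opNorm A.2) ≤
    max (opNorm (A.1 + c • B.1)) (opNorm (A.2 + c • B.2))

lemma EuclideanSpace.inner_piLp_equiv_symm {n : ℕ} (x y : Fin n → ℂ) :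
    inner ℂ ((WithLp.equiv 2 (Fin n → ℂ)).symm x) ((WithLp.equiv 2 (Fin n → ℂ)).symm y)
      = dotProduct (star x) y := by
  simp [EuclideanSpace.inner_toLp_toLp, dotProduct_comm]

lemma mulVec_form {n : ℕ} (x : Fin n → ℂ) (a c : ℂ) (v : Fin n → ℂ) :
    (a • Matrix.vecMulVec x (star x) + c • (1 : Matrix (Fin n) (Fin n) ℂ)) *ᵥ v
      = (a * (dotProduct (star x) v)) • x + c • v := by
  have h : Matrix.vecMulVec x (star x) *ᵥ v = (dotProduct (star x) v) • x := by
    ext i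
    simp only [Matrix.mulVec, Matrix.vecMulVec_apply, dotProduct, Pi.smul_apply,
      smul_eq_mul, Finset.sum_mul]
    exact Finset.sum_congr rfl fun j _ => by ring
  rw [Matrix.add_mulVec, Matrix.smul_mulVec, Matrix.smul_mulVec, Matrix.one_mulVec, h,
    smul_smul]

lemma clm_form {n : ℕ} (x : Fin n → ℂ) (a c : ℂ) (v : EuclideanSpace ℂ (Fin n)) :
    Matrix.toEuclideanCLM (𝕜 := ℂ) (n := Fin n)
        (a • Matrix.vecMulVec x (star x) + c • (1 : Matrix (Fin n) (Fin n) ℂ)) v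
      = (a * (inner ℂ ((WithLp.equiv 2 _).symm x) v : ℂ)) • (WithLp.equiv 2 _).symm x + c • v := by
  have h1 : v = WithLp.toLp 2 (WithLp.ofLp v) := rfl
  rw [h1, Matrix.toEuclideanCLM_toLp, mulVec_form, ← WithLp.equiv_symm_apply,
    EuclideanSpace.inner_piLp_equiv_symm]
  rfl

lemma norm_unit {n : ℕ} (x : Fin n → ℂ) (hx : dotProduct (star x) x = 1) :
    ‖((WithLp.equiv 2 _).symm x : EuclideanSpace ℂ (Fin n))‖ = 1 := by
  have h : (inner ℂ ((WithLp.equiv 2 _).symm x) ((WithLp.equiv 2 _).symm x : EuclideanSpace ℂ (Fin n)) : ℂ) = 1 := by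
    rw [EuclideanSpace.inner_piLp_equiv_symm, hx]
  have h2 := @inner_self_eq_norm_sq ℂ _ _ _ _ ((WithLp.equiv 2 _).symm x : EuclideanSpace ℂ (Fin n))
  rw [h] at h2
  have h3 : ‖((WithLp.equiv 2 _).symm x : EuclideanSpace ℂ (Fin n))‖^2 = 1 := by
    rw [← h2]; simp
  nlinarith [norm_nonneg ((WithLp.equiv 2 _).symm x : EuclideanSpace ℂ (Fin n))]

lemma opNorm_lower {n : ℕ} (x : Fin n → ℂ) (hx : dotProduct (star x) x = 1) (a c : ℂ) :
    ‖a + c‖ ≤ opNorm (a • Matrix.vecMulVec x (star x) + c • 1) := by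
  set e : EuclideanSpace ℂ (Fin n) := (WithLp.equiv 2 _).symm x with he
  have hne : ‖e‖ = 1 := norm_unit x hx
  have h := (Matrix.toEuclideanCLM (𝕜 := ℂ) (n := Fin n)
    (a • Matrix.vecMulVec x (star x) + c • 1)).le_opNorm e
  rw [clm_form, hne, mul_one] at h
  have hinner : (inner ℂ e e : ℂ) = 1 := by
    rw [he, EuclideanSpace.inner_piLp_equiv_symm, hx]
  rw [hinner] at h
  calc ‖a + c‖ = ‖(a * 1) • e + c • e‖ := by
        rw [← add_smul, norm_smul, hne, mul_one, mul_one]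
    _ ≤ _ := h

lemma opNorm_upper {n : ℕ} (x : Fin n → ℂ) (hx : dotProduct (star x) x = 1) (a c : ℂ) :
    opNorm (a • Matrix.vecMulVec x (star x) + c • 1)
      ≤ max (‖a + c‖) (‖c‖) := by
  apply ContinuousLinearMap.opNorm_le_bound _
    (le_trans (norm_nonneg c) (le_max_right _ _))
  intro v
  rw [clm_form]
  set e : EuclideanSpace ℂ (Fin n) := (WithLp.equiv 2 _).symm x with he
  have hne : ‖e‖ = 1 := norm_unit x hx
  set s : ℂ := inner ℂ e v with hs
  have hCS : ‖s‖ ≤ ‖v‖ := by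
    have := norm_inner_le_norm (𝕜 := ℂ) e v
    rwa [hne, one_mul] at this
  have hexp : ‖(a * s) • e + c • v‖^2 = ‖a + c‖^2 * ‖s‖^2
      + ‖c‖^2 * (‖v‖^2 - ‖s‖^2) := by
    rw [norm_add_sq (𝕜 := ℂ), inner_smul_left, inner_smul_right, norm_smul, norm_smul, hne,
      mul_one, ← hs]
    simp only [RCLike.re_to_complex, _root_.map_mul]
    simp only [mul_pow, Complex.sq_norm]
    simp only [Complex.normSq_apply, Complex.mul_re, Complex.mul_im, Complex.conj_re,
      Complex.conj_im, Complex.add_re, Complex.add_im]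
    ring
  have hvn : (0:ℝ) ≤ ‖v‖ := norm_nonneg v
  have hsn : (0:ℝ) ≤ ‖s‖ := norm_nonneg s
  rcases le_total (‖c‖) (‖a + c‖) with hle | hle
  · rw [max_eq_left hle]
    apply le_of_pow_le_pow_left₀ two_ne_zero (by positivity)
    rw [mul_pow]
    have h1 : ‖c‖ ^ 2 ≤ ‖a + c‖ ^ 2 := by
      nlinarith [mul_self_le_mul_self (norm_nonneg c) hle]
    have h2 : ‖s‖ ^ 2 ≤ ‖v‖ ^ 2 := by nlinarith
    nlinarith [mul_nonneg (sub_nonneg.2 h1) (sub_nonneg.2 h2)]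
  · rw [max_eq_right hle]
    apply le_of_pow_le_pow_left₀ two_ne_zero (by positivity)
    rw [mul_pow]
    have h1 : ‖a + c‖ ^ 2 ≤ ‖c‖ ^ 2 := by
      nlinarith [mul_self_le_mul_self (norm_nonneg (a + c)) hle]
    have h2 : ‖s‖ ^ 2 ≤ ‖v‖ ^ 2 := by nlinarith
    nlinarith [mul_nonneg (sub_nonneg.2 h1) (sq_nonneg (‖s‖))]

lemma opNorm_lower' {n : ℕ} (x : Fin n → ℂ) (hx : dotProduct (star x) x = 1) (a c : ℂ) :
    ‖a + c‖ ≤ opNorm (a • Matrix.vecMulVec x (star x) + c • 1) :=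
  opNorm_lower x hx a c

lemma opNorm_smul_le {n : ℕ} (x : Fin n → ℂ) (hx : dotProduct (star x) x = 1) (a : ℂ) :
    opNorm (a • Matrix.vecMulVec x (star x)) ≤ ‖a‖ := by
  have h := opNorm_upper x hx a 0
  simpa using h

lemma opNorm_smul_ge {n : ℕ} (x : Fin n → ℂ) (hx : dotProduct (star x) x = 1) (a : ℂ) :
    ‖a‖ ≤ opNorm (a • Matrix.vecMulVec x (star x)) := by
  have h := opNorm_lower x hx a 0
  simpa using h

lemma opNorm_one_lower {n : ℕ} (x : Fin n → ℂ) (hx : dotProduct (star x) x = 1) (c : ℂ) :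
    ‖1 + c‖ ≤ opNorm (Matrix.vecMulVec x (star x) + c • 1) := by
  have h := opNorm_lower x hx 1 c
  rwa [one_smul] at h

lemma opNorm_one_upper {n : ℕ} (x : Fin n → ℂ) (hx : dotProduct (star x) x = 1) (c : ℂ) :
    opNorm (Matrix.vecMulVec x (star x) + c • 1)
      ≤ max (‖1 + c‖) (‖c‖) := by
  have h := opNorm_upper x hx 1 c
  rwa [one_smul] at h

/-- For unit vectors `x₁, x₂` and unimodular `μ`, the element `x₁x₁* ⊕ μ x₂x₂*` is
BJ-orthogonal to the identity iff `μ = -1`. -/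
theorem stmt13 {n₁ n₂ : ℕ} (x₁ : Fin n₁ → ℂ) (x₂ : Fin n₂ → ℂ)
    (hx₁ : dotProduct (star x₁) x₁ = 1)
    (hx₂ : dotProduct (star x₂) x₂ = 1)
    (μ : ℂ) (hμ : ‖μ‖ = 1) :
    BJ2 (Matrix.vecMulVec x₁ (star x₁), μ • Matrix.vecMulVec x₂ (star x₂))
      ((1 : Matrix (Fin n₁) (Fin n₁) ℂ), (1 : Matrix (Fin n₂) (Fin n₂) ℂ)) ↔ μ = -1 := by
  constructor
  · intro hBJ
    by_contra hμne
    -- real components of μ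
    have hm2 : μ.re ^ 2 + μ.im ^ 2 = 1 := by
      have h := Complex.sq_norm μ
      rw [hμ] at h
      simp [Complex.normSq_apply] at h
      nlinarith
    have hre : -1 < μ.re := by
      by_contra h
      push_neg at h
      have him : μ.im = 0 := by nlinarith
      have hr1 : μ.re = -1 := by nlinarith
      exact hμne (Complex.ext hr1 (by simp [him]))
    set z : ℂ := 1 + μ with hz
    have hzre : z.re = 1 + μ.re := by simp [hz]
    have hzim : z.im = μ.im := by simp [hz]
    have hR : 0 < z.re := by rw [hzre]; linarith
    set N : ℝ := Complex.normSq z with hNdef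
    have hN : 0 < N := by
      rw [hNdef, Complex.normSq_apply]
      nlinarith
    have hNval : N = z.re ^ 2 + z.im ^ 2 := by
      rw [hNdef, Complex.normSq_apply]; ring
    have hR2N : z.re ^ 2 ≤ N := by rw [hNval]; nlinarith [sq_nonneg z.im]
    set t : ℝ := z.re / (2 * N) with ht
    have htpos : 0 < t := by positivity
    have htN : 2 * N * t = z.re := by rw [ht]; field_simp
    set c : ℂ := -((t : ℂ) * z) with hc
    have hcre : c.re = -(t * z.re) := by simp [hc]
    have hcim : c.im = -(t * z.im) := by simp [hc]
    -- the three norms are < 1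
    have habs : ∀ w : ℂ, Complex.normSq w < 1 → ‖w‖ < 1 := by
      intro w hw
      nlinarith [norm_nonneg w, Complex.sq_norm w]
    have hNt : t ^ 2 * N = t * z.re / 2 := by rw [← htN]; ring
    have htz : t * z.re ≤ 1 / 2 := by
      rw [ht, div_mul_eq_mul_div, div_le_iff₀ (by positivity)]
      nlinarith
    have hmain : t ^ 2 * (z.re ^ 2 + z.im ^ 2) < 1 := by
      rw [← hNval]; nlinarith
    have hcs : ‖c‖ < 1 := by
      apply habs
      rw [Complex.normSq_apply, hcre, hcim]
      nlinarith [hmain]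
    have h1c : ‖1 + c‖ < 1 := by
      apply habs
      rw [Complex.normSq_apply]
      simp only [Complex.add_re, Complex.add_im, Complex.one_re, Complex.one_im, hcre, hcim]
      nlinarith [sq_nonneg z.im, mul_pos htpos htpos, mul_pos hN (mul_pos htpos htpos)]
    have hmc : ‖μ + c‖ < 1 := by
      apply habs
      rw [Complex.normSq_apply]
      simp only [Complex.add_re, Complex.add_im, hcre, hcim]
      have hkey : μ.re * z.re + μ.im * z.im = z.re := by
        rw [hzre, hzim]; nlinarith
      nlinarith [mul_pos hN (mul_pos htpos htpos)]
    -- contradiction with BJ at c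
    have h := hBJ c
    have hl : (1 : ℝ) ≤ max (opNorm (Matrix.vecMulVec x₁ (star x₁)))
        (opNorm (μ • Matrix.vecMulVec x₂ (star x₂))) := by
      have := opNorm_smul_ge x₁ hx₁ 1
      rw [one_smul] at this
      simpa using le_max_of_le_left (by simpa using this)
    have hu1 := opNorm_one_upper x₁ hx₁ c
    have hu2 := opNorm_upper x₂ hx₂ μ c
    simp only at h
    have : (1:ℝ) ≤ max (max (‖1 + c‖) (‖c‖))
        (max (‖μ + c‖) (‖c‖)) :=
      le_trans hl (le_trans h (max_le_max hu1 hu2))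
    have hlt : max (max (‖1 + c‖) (‖c‖))
        (max (‖μ + c‖) (‖c‖)) < 1 := by
      apply max_lt <;> apply max_lt <;> assumption
    linarith
  · rintro rfl
    intro c
    have hl1 : opNorm (Matrix.vecMulVec x₁ (star x₁)) ≤ 1 := by
      have := opNorm_smul_le x₁ hx₁ 1
      rw [one_smul] at this
      simpa using this
    have hl2 : opNorm ((-1 : ℂ) • Matrix.vecMulVec x₂ (star x₂)) ≤ 1 := by
      have := opNorm_smul_le x₂ hx₂ (-1)
      simpa using this
    have hr1 := opNorm_one_lower x₁ hx₁ c
    have hr2 := opNorm_lower' x₂ hx₂ (-1) c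
    have htri : (2:ℝ) ≤ ‖1 + c‖ + ‖-1 + c‖ := by
      have h := norm_add_le (1 + c) (-(-1 + c))
      have h2 : (1 + c) + -(-1 + c) = 2 := by ring
      rw [h2, norm_neg] at h
      have h3 : ‖(2:ℂ)‖ = 2 := by simp
      rw [h3] at h
      exact h
    have hge : (1:ℝ) ≤ max (opNorm (Matrix.vecMulVec x₁ (star x₁) + c • 1))
        (opNorm ((-1 : ℂ) • Matrix.vecMulVec x₂ (star x₂) + c • 1)) := by
      rcases le_total (‖1 + c‖) (‖-1 + c‖) with hcc | hcc
      · have : (1:ℝ) ≤ ‖-1 + c‖ := by linarith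
        exact le_max_of_le_right (le_trans this hr2)
      · have : (1:ℝ) ≤ ‖1 + c‖ := by linarith
        exact le_max_of_le_left (le_trans this hr1)
    simp only
    exact le_trans (max_le (le_trans hl1 hge) (le_trans hl2 hge)) (le_refl _)
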